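/- Let 𝒟 be a category with pullbacks, 𝒞 a category, G, G' : 𝒞 ⥤ 𝒟 functors and α : G ⟶ G' a natural transformation. Then the functor Λ : Comma (𝟭 𝒟) G ⥤ Comma (𝟭 𝒟) G' sending an object (F, E, u : F ⟶ G(E)) to (F, E, α_E ∘ u) and a morphism (g, h) to (g, h) has a right adjoint, which sends an object (F', E, u' : F' ⟶ G'(E)) to (P, E, q), where (P, q : P ⟶ G(E), r : P ⟶ F') is the pullback in 𝒟 of α_E : G(E) ⟶ G'(E) and u' : F' ⟶ G'(E). -/

import Mathlib

open CategoryTheory Limits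

/-- The functor `Λ : Comma (𝟭 𝒟) G ⥤ Comma (𝟭 𝒟) G'` given by postcomposition with a
natural transformation `α : G ⟶ G'`. -/
def postcompComma {D : Type*} [Category D] {C : Type*} [Category C] {G G' : C ⥤ D}
    (α : G ⟶ G') : Comma (𝟭 D) G ⥤ Comma (𝟭 D) G' where
  obj X := { left := X.left, right := X.right, hom := X.hom ≫ α.app X.right }
  map {X Y} φ :=
    { left := φ.left
      right := φ.right
      w := by
        have h := φ.w
        dsimp at h ⊢
        rw [← Category.assoc, h, Category.assoc, Category.assoc, α.naturality] }

@[simp] theorem postcompComma_obj_left {D : Type*} [Category D] {C : Type*} [Category C]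
    {G G' : C ⥤ D} (α : G ⟶ G') (X : Comma (𝟭 D) G) :
    ((postcompComma α).obj X).left = X.left := rfl

@[simp] theorem postcompComma_obj_right {D : Type*} [Category D] {C : Type*} [Category C]
    {G G' : C ⥤ D} (α : G ⟶ G') (X : Comma (𝟭 D) G) :
    ((postcompComma α).obj X).right = X.right := rfl

@[simp] theorem postcompComma_obj_hom {D : Type*} [Category D] {C : Type*} [Category C]
    {G G' : C ⥤ D} (α : G ⟶ G') (X : Comma (𝟭 D) G) :
    ((postcompComma α).obj X).hom = X.hom ≫ α.app X.right := rfl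

@[simp] theorem postcompComma_map_left {D : Type*} [Category D] {C : Type*} [Category C]
    {G G' : C ⥤ D} (α : G ⟶ G') {X Y : Comma (𝟭 D) G} (φ : X ⟶ Y) :
    ((postcompComma α).map φ).left = φ.left := rfl

@[simp] theorem postcompComma_map_right {D : Type*} [Category D] {C : Type*} [Category C]
    {G G' : C ⥤ D} (α : G ⟶ G') {X Y : Comma (𝟭 D) G} (φ : X ⟶ Y) :
    ((postcompComma α).map φ).right = φ.right := rfl

/-- The right adjoint. -/
@[simps]
noncomputable def postcompCommaRAdj {D : Type*} [Category D] {C : Type*} [Category C]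
    [HasPullbacks D] {G G' : C ⥤ D} (α : G ⟶ G') : Comma (𝟭 D) G' ⥤ Comma (𝟭 D) G where
  obj X' :=
    { left := pullback (α.app X'.right) X'.hom
      right := X'.right
      hom := pullback.fst (α.app X'.right) X'.hom }
  map {X' Y'} φ :=
    { left := pullback.lift
        (pullback.fst _ _ ≫ G.map φ.right) (pullback.snd _ _ ≫ φ.left) (by
          have h := φ.w
          dsimp at h
          rw [Category.assoc, α.naturality, ← Category.assoc, pullback.condition,
            Category.assoc, ← h, ← Category.assoc])
      right := φ.right
      w := by dsimp; rw [pullback.lift_fst] }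
  map_id X' := by
    apply CommaMorphism.ext
    · dsimp
      ext <;> simp
    · rfl
  map_comp {X' Y' Z'} φ ψ := by
    apply CommaMorphism.ext
    · dsimp
      apply pullback.hom_ext <;> simp only [Category.assoc, pullback.lift_fst, pullback.lift_snd, pullback.lift_fst_assoc, pullback.lift_snd_assoc, Functor.map_comp]
    · rfl

/-- For `𝒟` with pullbacks, the postcomposition functor
`Λ : Comma (𝟭 𝒟) G ⥤ Comma (𝟭 𝒟) G'` has a right adjoint sending `(F', E, u')` to
`(P, E, q)` where `(P, q, r)` is the pullback of `α_E` and `u'`. -/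
theorem postcompComma_has_right_adjoint
    {D : Type*} [Category D] {C : Type*} [Category C] [HasPullbacks D] {G G' : C ⥤ D}
    (α : G ⟶ G') :
    ∃ R : Comma (𝟭 D) G' ⥤ Comma (𝟭 D) G,
      Nonempty (postcompComma α ⊣ R) ∧
        ∀ X' : Comma (𝟭 D) G',
          Nonempty (R.obj X' ≅
            { left := pullback (α.app X'.right) X'.hom
              right := X'.right
              hom := pullback.fst (α.app X'.right) X'.hom }) := by
  refine ⟨postcompCommaRAdj α, ⟨Adjunction.mkOfHomEquiv
    { homEquiv := fun X Y' =>
        { toFun := fun φ =>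
            { left := pullback.lift (X.hom ≫ G.map φ.right) φ.left (by
                have h := φ.w
                dsimp at h ⊢
                rw [Category.assoc]; exact (congrArg (X.hom ≫ ·) (α.naturality φ.right)).trans ((Category.assoc _ _ _).symm.trans h.symm))
              right := φ.right
              w := by dsimp; exact pullback.lift_fst _ _ _ }
          invFun := fun ψ =>
            { left := ψ.left ≫ pullback.snd _ _
              right := ψ.right
              w := by
                have h := ψ.w
                dsimp at h ⊢
                have e1 := congrArg (ψ.left ≫ ·) (pullback.condition (f := α.app Y'.right) (g := Y'.hom))
                have e2 := congrArg (· ≫ α.app Y'.right) h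
                have e3 := α.naturality ψ.right
                simp only [Category.assoc] at e1 e2 ⊢
                exact (Category.assoc _ _ _).trans (e1.symm.trans ((Category.assoc _ _ _).symm.trans (e2.trans ((Category.assoc _ _ _).trans (congrArg (X.hom ≫ ·) e3))))) }
          left_inv := fun φ => by
            apply CommaMorphism.ext
            · dsimp; exact pullback.lift_snd _ _ _
            · rfl
          right_inv := fun ψ => by
            apply CommaMorphism.ext
            · dsimp
              apply pullback.hom_ext
              · have h := ψ.w; dsimp at h; exact (pullback.lift_fst _ _ _).trans h.symm
              · exact pullback.lift_snd _ _ _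
            · rfl }
      homEquiv_naturality_left_symm := fun {X X' Y} f g => by
        apply CommaMorphism.ext
        · dsimp; exact Category.assoc _ _ _
        · rfl
      homEquiv_naturality_right := fun {X Y Y'} f g => by
        apply CommaMorphism.ext
        · dsimp
          apply pullback.hom_ext
          · exact (pullback.lift_fst _ _ _).trans ((congrArg (X.hom ≫ ·) (G.map_comp f.right g.right)).trans ((Category.assoc _ _ _).symm.trans ((congrArg (· ≫ G.map g.right) (pullback.lift_fst _ _ _).symm).trans ((Category.assoc _ _ _).trans ((congrArg (_ ≫ ·) (pullback.lift_fst _ _ _).symm).trans (Category.assoc _ _ _).symm)))))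
          · exact (pullback.lift_snd _ _ _).trans ((congrArg (· ≫ g.left) (pullback.lift_snd _ _ _).symm).trans ((Category.assoc _ _ _).trans ((congrArg (_ ≫ ·) (pullback.lift_snd _ _ _).symm).trans (Category.assoc _ _ _).symm)))
        · rfl }⟩, fun X' => ⟨Iso.refl _⟩⟩
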